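/- Let R : Fin p → (Fin n →₀ ℕ) be nonzero exponent multi-indices such that the monomials x^{R_1}, …, x^{R_p} are algebraically independent over ℂ (as elements of the polynomial ring ℂ[x_1,…,x_n]). Let f_1, …, f_l be formal power series in p variables over ℂ, and for each j let F_j be the formal power series in n variables obtained from f_j by substituting u_i ↦ x^{R_i} for each i (this substitution is well defined since each R_i ≠ 0). Then the family (F_1,…,F_l) is nondegenerate if and only if the family (f_1,…,f_l) is nondegenerate; that is: (for every nonzero c ∈ ℂˡ, Σ_{j=1}^l c_j F_j ≠ 0) if and only if (for every nonzero c ∈ ℂˡ, Σ_{j=1}^l c_j f_j ≠ 0). -/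

import Mathlib

/-- Substituting algebraically independent monomials `x^{R_i}` (with `R_i ≠ 0`) into a
family of formal power series preserves nondegeneracy in the sense of Rüssmann.
Here `F j` is characterized by its coefficients: the coefficient of `x^E` in `F j` is the
(finite) sum of the coefficients of `u^D` in `f j` over all `D` with `∑ i, D i • R i = E`. -/
theorem stmt_3 (n p l : ℕ) (R : Fin p → (Fin n →₀ ℕ)) (hR : ∀ i, R i ≠ 0)
    (halg : AlgebraicIndependent ℂ fun i : Fin p =>
      (MvPolynomial.monomial (R i) (1 : ℂ) : MvPolynomial (Fin n) ℂ))
    (f : Fin l → MvPowerSeries (Fin p) ℂ)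
    (F : Fin l → MvPowerSeries (Fin n) ℂ)
    (hF : ∀ j, ∀ E : Fin n →₀ ℕ, MvPowerSeries.coeff E (F j) =
      ∑ᶠ (D : Fin p →₀ ℕ) (_ : ∑ i, D i • R i = E), MvPowerSeries.coeff D (f j)) :
    (∀ c : Fin l → ℂ, c ≠ 0 → ∑ j, c j • F j ≠ 0) ↔
      (∀ c : Fin l → ℂ, c ≠ 0 → ∑ j, c j • f j ≠ 0) := by
  classical
  set φ : (Fin p →₀ ℕ) → (Fin n →₀ ℕ) := fun D => ∑ i, D i • R i with hφ
  -- aeval of a monomial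
  have haev : ∀ D : Fin p →₀ ℕ,
      (MvPolynomial.aeval fun i : Fin p =>
        (MvPolynomial.monomial (R i) (1 : ℂ) : MvPolynomial (Fin n) ℂ))
        (MvPolynomial.monomial D (1 : ℂ)) = MvPolynomial.monomial (φ D) (1 : ℂ) := by
    intro D
    rw [MvPolynomial.aeval_monomial, map_one, one_mul]
    have : (φ D : Fin n →₀ ℕ) = ∑ i, D i • R i := rfl
    rw [this, MvPolynomial.monomial_sum_one]
    rw [Finsupp.prod_fintype]
    · apply Finset.prod_congr rfl
      intro i _
      rw [MvPolynomial.monomial_pow, one_pow]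
    · intro i
      simp
  -- injectivity of φ
  have hinj : Function.Injective φ := by
    intro D D' h
    have := halg
    have h2 : (MvPolynomial.aeval fun i : Fin p =>
        (MvPolynomial.monomial (R i) (1 : ℂ) : MvPolynomial (Fin n) ℂ))
        (MvPolynomial.monomial D (1 : ℂ)) =
        (MvPolynomial.aeval fun i : Fin p =>
        (MvPolynomial.monomial (R i) (1 : ℂ) : MvPolynomial (Fin n) ℂ))
        (MvPolynomial.monomial D' (1 : ℂ)) := by
      rw [haev, haev, h]
    have h3 := halg h2
    have := MvPolynomial.monomial_left_injective (one_ne_zero (α := ℂ)) h3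
    exact this
  -- coefficient identities
  have hA : ∀ j (D : Fin p →₀ ℕ),
      MvPowerSeries.coeff (φ D) (F j) = MvPowerSeries.coeff D (f j) := by
    intro j D
    rw [hF]
    have : ∀ D' : Fin p →₀ ℕ,
        (∑ᶠ (_ : ∑ i, D' i • R i = φ D), MvPowerSeries.coeff D' (f j)) =
        if φ D' = φ D then MvPowerSeries.coeff D' (f j) else 0 := by
      intro D'; rw [finsum_eq_if]
    rw [finsum_congr this, finsum_eq_single _ D]
    · rw [if_pos rfl]
    · intro D' hD'
      rw [if_neg (fun h => hD' (hinj h))]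
  have hB : ∀ j (E : Fin n →₀ ℕ), (∀ D, φ D ≠ E) →
      MvPowerSeries.coeff E (F j) = 0 := by
    intro j E hE
    rw [hF]
    apply finsum_eq_zero_of_forall_eq_zero
    intro D
    rw [finsum_eq_if, if_neg (hE D)]
  -- key equivalence per c
  have key : ∀ c : Fin l → ℂ, (∑ j, c j • F j = 0 ↔ ∑ j, c j • f j = 0) := by
    intro c
    constructor
    · intro h
      ext D
      have h1 : MvPowerSeries.coeff (φ D) (∑ j, c j • F j) = 0 := by rw [h]; simp
      rw [map_sum] at h1 ⊢
      simp only [MvPowerSeries.coeff_smul] at h1 ⊢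
      simp only [hA] at h1
      simpa using h1
    · intro h
      ext E
      rw [map_sum]
      simp only [MvPowerSeries.coeff_smul, map_zero]
      by_cases hE : ∃ D, φ D = E
      · obtain ⟨D, rfl⟩ := hE
        simp only [hA]
        have h1 : MvPowerSeries.coeff D (∑ j, c j • f j) = 0 := by rw [h]; simp
        rw [map_sum] at h1
        simpa [MvPowerSeries.coeff_smul] using h1
      · push_neg at hE
        simp [hB _ _ hE]
  constructor
  · intro H c hc hf0
    exact H c hc ((key c).mpr hf0)
  · intro H c hc hF0
    exact H c hc ((key c).mp hF0)
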